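/- For every l ≥ 4, the polynomial f_{D_l} satisfies the third-order Fuchsian ODE t(t-1)(2t-1)·y''' + ((l+6)(t²−t)+2)·y'' − l(l−1)(2t−1)·y' − l(l−1)(l+2)·y = 0, where derivatives are formal derivatives in ℚ[t] and f_{D_l}(t) = Σ_{k=0}^{l} (-1)^k (C(l,k)·C(l+k-1,k) + C(l-2,k-2)·C(l+k-2,k))·t^k. -/

import Mathlib

open Polynomial Finset

noncomputable def fD (l : ℕ) : Polynomial ℚ :=
  ∑ k ∈ Finset.range (l + 1),
    Polynomial.C ((-1 : ℚ) ^ k *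
      ((l.choose k * (l + k - 1).choose k
        + if 2 ≤ k then (l - 2).choose (k - 2) * (l + k - 2).choose k else 0 : ℕ) : ℚ)) *
      Polynomial.X ^ k

noncomputable def bQ (l k : ℕ) : ℚ := (l.choose k * (l + k - 1).choose k : ℕ)

noncomputable def cQ (l k : ℕ) : ℚ :=
  ((if 2 ≤ k then (l - 2).choose (k - 2) * (l + k - 2).choose k else 0 : ℕ) : ℚ)

noncomputable def aQ (l k : ℕ) : ℚ := (-1) ^ k * (bQ l k + cQ l k)

lemma hbQ (l m : ℕ) (hl : 1 ≤ l) :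
    ((m : ℚ) + 1) ^ 2 * bQ l (m + 1) = ((l : ℚ) - m) * ((l : ℚ) + m) * bQ l m := by
  have hidx : l + (m + 1) - 1 = l + m := by omega
  rcases lt_or_ge m l with h | h
  · -- m < l
    have hml : m ≤ l := le_of_lt h
    have t1 : l.choose (m + 1) * (m + 1) = l.choose m * (l - m) := Nat.choose_succ_right_eq l m
    have t2 : (l + m) * (l + m - 1).choose m = (l + m).choose (m + 1) * (m + 1) := by
      have h2 : l + m - 1 + 1 = l + m := by omega
      have := Nat.add_one_mul_choose_eq (l + m - 1) m
      rw [h2] at this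
      exact this
    have t1' : (l.choose (m + 1) : ℚ) * ((m : ℚ) + 1) = (l.choose m : ℚ) * ((l : ℚ) - m) := by
      have := congrArg (Nat.cast : ℕ → ℚ) t1
      push_cast [Nat.cast_sub hml] at this
      linarith [this]
    have t2' : ((l : ℚ) + m) * ((l + m - 1).choose m : ℚ)
        = ((l + m).choose (m + 1) : ℚ) * ((m : ℚ) + 1) := by
      have := congrArg (Nat.cast : ℕ → ℚ) t2
      push_cast at this
      linarith [this]
    rw [bQ, bQ, hidx]
    push_cast
    linear_combination (((l + m).choose (m + 1) : ℚ) * ((m : ℚ) + 1)) * t1'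
      - ((l.choose m : ℚ) * ((l : ℚ) - m)) * t2'
  · -- l ≤ m
    have z1 : l.choose (m + 1) = 0 := Nat.choose_eq_zero_of_lt (by omega)
    rcases Nat.eq_or_lt_of_le h with rfl | h'
    · rw [bQ, bQ, z1]; push_cast; ring
    · have z0 : l.choose m = 0 := Nat.choose_eq_zero_of_lt h'
      rw [bQ, bQ, z0, z1]; push_cast; ring

lemma hcQ (l m : ℕ) (hl : 4 ≤ l) :
    (l : ℚ) * ((l : ℚ) + m - 1) * cQ l m = (m : ℚ) * ((m : ℚ) - 1) * bQ l m := by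
  by_cases hm2 : 2 ≤ m
  · rw [cQ, if_pos hm2, bQ]
    rcases lt_or_ge l m with h | hml
    · have z1 : (l - 2).choose (m - 2) = 0 := Nat.choose_eq_zero_of_lt (by omega)
      have z2 : l.choose m = 0 := Nat.choose_eq_zero_of_lt h
      rw [z1, z2]; push_cast; ring
    · have e1 : l * (l - 1).choose (m - 1) = l.choose m * m := by
        have := Nat.add_one_mul_choose_eq (l - 1) (m - 1)
        rw [show l - 1 + 1 = l by omega, show m - 1 + 1 = m by omega] at this
        exact this
      have e2 : (l - 1) * (l - 2).choose (m - 2) = (l - 1).choose (m - 1) * (m - 1) := by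
        have := Nat.add_one_mul_choose_eq (l - 2) (m - 2)
        rw [show l - 2 + 1 = l - 1 by omega, show m - 2 + 1 = m - 1 by omega] at this
        exact this
      have e3 : (l + m - 2).choose m * (l + m - 1) = (l + m - 1).choose m * (l - 1) := by
        have := Nat.choose_mul_succ_eq (l + m - 2) m
        rw [show l + m - 2 + 1 = l + m - 1 by omega, show l + m - 1 - m = l - 1 by omega] at this
        exact this
      have h1l : (1 : ℕ) ≤ l := by omega
      have e1' : (l : ℚ) * ((l - 1).choose (m - 1) : ℚ) = (l.choose m : ℚ) * m := by
        exact_mod_cast congrArg (Nat.cast : ℕ → ℚ) e1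
      have e2' : ((l : ℚ) - 1) * ((l - 2).choose (m - 2) : ℚ)
          = ((l - 1).choose (m - 1) : ℚ) * ((m : ℚ) - 1) := by
        have := congrArg (Nat.cast : ℕ → ℚ) e2
        push_cast [Nat.cast_sub h1l, Nat.cast_sub (show 1 ≤ m by omega)] at this
        linarith [this]
      have e3' : ((l + m - 2).choose m : ℚ) * ((l : ℚ) + m - 1)
          = ((l + m - 1).choose m : ℚ) * ((l : ℚ) - 1) := by
        have := congrArg (Nat.cast : ℕ → ℚ) e3
        push_cast [Nat.cast_sub (show 1 ≤ l + m by omega), Nat.cast_sub h1l] at this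
        linarith [this]
      push_cast
      linear_combination (((m : ℚ) - 1) * ((l + m - 1).choose m : ℚ)) * e1'
        + ((l : ℚ) * ((l + m - 1).choose m : ℚ)) * e2'
        + ((l : ℚ) * ((l - 2).choose (m - 2) : ℚ)) * e3'
  · interval_cases m <;> simp [cQ]

lemma keyS (l : ℕ) (hl : 4 ≤ l) (m : ℕ) :
    ((m : ℚ) - l) * (2 * (m : ℚ) + l + 2) * ((m : ℚ) + l - 1) * (bQ l m + cQ l m)
      + ((m : ℚ) + 1) * (3 * (m : ℚ) ^ 2 + ((l : ℚ) + 3) * m - (l : ℚ) * ((l : ℚ) - 1))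
          * (bQ l (m + 1) + cQ l (m + 1))
      + ((m : ℚ) + 1) * ((m : ℚ) + 2) ^ 2 * (bQ l (m + 2) + cQ l (m + 2)) = 0 := by
  have h1 := hbQ l m (by omega)
  have h2 := hbQ l (m + 1) (by omega)
  have hc0 := hcQ l m hl
  have hc1 := hcQ l (m + 1) hl
  have hc2 := hcQ l (m + 2) hl
  push_cast at h2 hc1 hc2
  set L : ℚ := (l : ℚ) with hL
  set M : ℚ := (m : ℚ) with hM
  have hl' : (4 : ℚ) ≤ L := by rw [hL]; exact_mod_cast hl
  have hm' : (0 : ℚ) ≤ M := by rw [hM]; exact Nat.cast_nonneg m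
  have hK : L * (L + M - 1) * (L + M) * (L + M + 1) ≠ 0 := by
    have t1 : (0:ℚ) < L := by linarith
    have t2 : (0:ℚ) < L + M - 1 := by linarith
    have t3 : (0:ℚ) < L + M := by linarith
    have t4 : (0:ℚ) < L + M + 1 := by linarith
    exact ne_of_gt (mul_pos (mul_pos (mul_pos t1 t2) t3) t4)
  have key0 : (L * (L + M - 1) * (L + M) * (L + M + 1)) *
      ((M - L) * (2 * M + L + 2) * (M + L - 1) * (bQ l m + cQ l m)
        + (M + 1) * (3 * M ^ 2 + (L + 3) * M - L * (L - 1)) * (bQ l (m + 1) + cQ l (m + 1))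
        + (M + 1) * (M + 2) ^ 2 * (bQ l (m + 2) + cQ l (m + 2))) = 0 := by
    linear_combination
      (2*M - 4*M^3 + 2*M^5 + 2*L + L*M - 9*L*M^2 - L*M^3 + 7*L*M^4 - L^2 - 9*L^2*M
        - L^2*M^2 + 11*L^2*M^3 - 3*L^3 + L^3*M + 10*L^3*M^2 + L^4 + 5*L^4*M + L^5) * h1
      + ((M + 1) * (L + M - 1) * (L + M) * (L * (L + M + 1) + (M + 1) * (M + 2))) * h2
      + ((M - L) * (2*M + L + 2) * (M + L - 1) * (L + M) * (L + M + 1)) * hc0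
      + ((M + 1) * (3*M^2 + (L + 3)*M - L^2 + L) * (L + M - 1) * (L + M + 1)) * hc1
      + ((M + 1) * (M + 2)^2 * (L + M - 1) * (L + M)) * hc2
  exact (mul_eq_zero.mp key0).resolve_left hK

lemma keyA (l : ℕ) (hl : 4 ≤ l) (m : ℕ) :
    ((m : ℚ) - l) * (2 * (m : ℚ) + l + 2) * ((m : ℚ) + l - 1) * aQ l m
      - ((m : ℚ) + 1) * (3 * (m : ℚ) ^ 2 + ((l : ℚ) + 3) * m - (l : ℚ) * ((l : ℚ) - 1))
          * aQ l (m + 1)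
      + ((m : ℚ) + 1) * ((m : ℚ) + 2) ^ 2 * aQ l (m + 2) = 0 := by
  simp only [aQ, pow_succ]
  linear_combination ((-1 : ℚ) ^ m) * keyS l hl m

lemma coeff_fD (l : ℕ) (hl : 4 ≤ l) (n : ℕ) : (fD l).coeff n = aQ l n := by
  rw [fD, finset_sum_coeff]
  simp only [coeff_C_mul, coeff_X_pow, mul_ite, mul_one, mul_zero]
  rw [Finset.sum_ite_eq (Finset.range (l + 1)) n]
  by_cases hn : n ∈ Finset.range (l + 1)
  · rw [if_pos hn, aQ, bQ, cQ]
    push_cast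
    ring
  · rw [if_neg hn]
    have hln : l < n := by simpa using hn
    have z1 : l.choose n = 0 := Nat.choose_eq_zero_of_lt hln
    have z2 : (l - 2).choose (n - 2) = 0 := Nat.choose_eq_zero_of_lt (by omega)
    simp [aQ, bQ, cQ, z1, z2]

theorem fD_fuchsian_ode (l : ℕ) (hl : 4 ≤ l) :
    Polynomial.X * (Polynomial.X - 1) * (2 * Polynomial.X - 1) *
        (Polynomial.derivative^[3] (fD l))
      + (Polynomial.C ((l : ℚ) + 6) * (Polynomial.X ^ 2 - Polynomial.X) + 2) *
        (Polynomial.derivative^[2] (fD l))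
      - Polynomial.C ((l : ℚ) * ((l : ℚ) - 1)) * (2 * Polynomial.X - 1) *
        (Polynomial.derivative (fD l))
      - Polynomial.C ((l : ℚ) * ((l : ℚ) - 1) * ((l : ℚ) + 2)) * fD l = 0 := by
  have h0 : ∀ n, (fD l).coeff n = aQ l n := coeff_fD l hl
  have h1 : ∀ n, (Polynomial.derivative (fD l)).coeff n = aQ l (n + 1) * ((n : ℚ) + 1) := by
    intro n; rw [Polynomial.coeff_derivative, h0]
  have h2 : ∀ n, (Polynomial.derivative^[2] (fD l)).coeff n
      = aQ l (n + 2) * (((n : ℚ) + 2) * ((n : ℚ) + 1)) := by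
    intro n
    have e : Polynomial.derivative^[2] (fD l)
        = Polynomial.derivative (Polynomial.derivative (fD l)) := rfl
    rw [e, Polynomial.coeff_derivative, h1]
    push_cast
    ring
  have h3 : ∀ n, (Polynomial.derivative^[3] (fD l)).coeff n
      = aQ l (n + 3) * (((n : ℚ) + 3) * ((n : ℚ) + 2) * ((n : ℚ) + 1)) := by
    intro n
    have e : Polynomial.derivative^[3] (fD l)
        = Polynomial.derivative (Polynomial.derivative^[2] (fD l)) := rfl
    rw [e, Polynomial.coeff_derivative, h2]
    push_cast
    ring
  set q0 := fD l
  set q1 := Polynomial.derivative (fD l) with hq1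
  set q2 := Polynomial.derivative^[2] (fD l) with hq2
  set q3 := Polynomial.derivative^[3] (fD l) with hq3
  have hre : Polynomial.X * (Polynomial.X - 1) * (2 * Polynomial.X - 1) * q3
      + (Polynomial.C ((l : ℚ) + 6) * (Polynomial.X ^ 2 - Polynomial.X) + 2) * q2
      - Polynomial.C ((l : ℚ) * ((l : ℚ) - 1)) * (2 * Polynomial.X - 1) * q1
      - Polynomial.C ((l : ℚ) * ((l : ℚ) - 1) * ((l : ℚ) + 2)) * q0
      = Polynomial.C 2 * (q3 * Polynomial.X ^ 3) - Polynomial.C 3 * (q3 * Polynomial.X ^ 2)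
        + q3 * Polynomial.X ^ 1
        + Polynomial.C ((l : ℚ) + 6) * (q2 * Polynomial.X ^ 2)
        - Polynomial.C ((l : ℚ) + 6) * (q2 * Polynomial.X ^ 1)
        + Polynomial.C 2 * q2
        - Polynomial.C (2 * (l : ℚ) * ((l : ℚ) - 1)) * (q1 * Polynomial.X ^ 1)
        + Polynomial.C ((l : ℚ) * ((l : ℚ) - 1)) * q1
        - Polynomial.C ((l : ℚ) * ((l : ℚ) - 1) * ((l : ℚ) + 2)) * q0 := by
    simp only [map_add, map_mul, map_sub, map_ofNat, map_one]
    ring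
  rw [hre]
  rw [Polynomial.ext_iff]
  intro m
  simp only [Polynomial.coeff_add, Polynomial.coeff_sub, Polynomial.coeff_C_mul,
    Polynomial.coeff_mul_X_pow', Polynomial.coeff_zero, h0, h1, h2, h3]
  match m with
  | 0 =>
    norm_num
    linear_combination keyA l hl 0
  | 1 =>
    norm_num
    linear_combination keyA l hl 1
  | 2 =>
    norm_num
    linear_combination keyA l hl 2
  | (n + 3) =>
    have c3 : 3 ≤ n + 3 := by omega
    have c2 : 2 ≤ n + 3 := by omega
    have c1 : 1 ≤ n + 3 := by omega
    rw [if_pos c3, if_pos c2, if_pos c1]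
    simp only [show n + 3 - 3 = n from by omega, show n + 3 - 2 = n + 1 from by omega,
      show n + 3 - 1 = n + 2 from by omega]
    have hk := keyA l hl (n + 3)
    push_cast at hk ⊢
    linear_combination hk
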